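/- Let U : [−1,1] → ℝ be continuous, β > 0, h ∈ ℝ. For N ≥ 2 and σ ∈ {-1,1}^N set m̂_i(σ) := (1/N)·Σ_{j≠i} σ_j, and define the Hamiltonian H_N(σ) := −Σ_{i=1}^N σ_i·U(m̂_i(σ)) − h·Σ_{i=1}^N σ_i. Then lim_{N→∞} (1/N)·log Σ_{σ ∈ {-1,1}^N} exp(−β·H_N(σ)) = max_{m ∈ [−1,1]} [ β·m·U(m) + βh·m − g(m) ]. -/

import Mathlib

open Real Filter Finset

/-- The spin value ±1 associated to a Boolean. -/
noncomputable def spin (b : Bool) : ℝ := if b then 1 else -1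

/-- Minus the binary entropy as a function of the magnetization `m`:
`g(m) = ((1-m)/2) log((1-m)/2) + ((1+m)/2) log((1+m)/2)`
(with the convention `0·log 0 = 0`, automatic since `Real.log 0 = 0`). -/
noncomputable def gEntropy (m : ℝ) : ℝ :=
  ((1 - m) / 2) * Real.log ((1 - m) / 2) + ((1 + m) / 2) * Real.log ((1 + m) / 2)

/-- The general fully connected Hamiltonian with potential `U` of the empirical
magnetization of the remaining spins:
`H_N(σ) = -∑_i σ_i U(m̂_i(σ)) - h ∑_i σ_i`, `m̂_i(σ) = (1/N) ∑_{j≠i} σ_j`. -/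
noncomputable def hamFC {N : ℕ} (U : ℝ → ℝ) (h : ℝ) (σ : Fin N → Bool) : ℝ :=
  -(∑ i, spin (σ i) *
      U ((1 / (N : ℝ)) * ∑ j ∈ Finset.univ.erase i, spin (σ j)))
    - h * ∑ i, spin (σ i)

private lemma succ_pow_le_aux (n : ℕ) (hn : 1 ≤ n) :
    ((n : ℝ) + 1) ^ n ≤ Real.exp 1 * (n : ℝ) ^ n := by
  have hn0 : (0:ℝ) < n := by exact_mod_cast hn
  have h1 : (n : ℝ) + 1 ≤ n * Real.exp (1 / n) := by
    have h := Real.add_one_le_exp (1 / (n:ℝ))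
    have h2 : (n:ℝ) * (1/n + 1) ≤ (n:ℝ) * Real.exp (1/n) :=
      mul_le_mul_of_nonneg_left h hn0.le
    calc (n:ℝ) + 1 = n * (1/n + 1) := by field_simp; ring
    _ ≤ n * Real.exp (1/n) := h2
  calc ((n:ℝ)+1)^n ≤ ((n:ℝ) * Real.exp (1/n))^n := by
        exact pow_le_pow_left₀ (by positivity) h1 n
  _ = (n:ℝ)^n * Real.exp (1/n) ^ n := mul_pow _ _ _
  _ = (n:ℝ)^n * Real.exp 1 := by
        rw [← Real.exp_nat_mul]
        congr 1
        field_simp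
  _ = Real.exp 1 * (n:ℝ)^n := mul_comm _ _

private lemma pow_le_factorial_mul (n : ℕ) :
    (n:ℝ) ^ n ≤ (n.factorial : ℝ) * Real.exp n := by
  induction n with
  | zero => simp
  | succ n ih =>
    rcases Nat.eq_zero_or_pos n with h0 | h1
    · subst h0
      have := Real.add_one_le_exp (1:ℝ)
      norm_num [Nat.factorial]
    · have key := succ_pow_le_aux n h1
      have hfn : (0:ℝ) ≤ (n.factorial : ℝ) := by positivity
      calc ((n+1:ℕ):ℝ)^(n+1) = ((n:ℝ)+1) * ((n:ℝ)+1)^n := by push_cast; ring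
      _ ≤ ((n:ℝ)+1) * (Real.exp 1 * (n:ℝ)^n) := by
            apply mul_le_mul_of_nonneg_left key (by positivity)
      _ ≤ ((n:ℝ)+1) * (Real.exp 1 * ((n.factorial:ℝ) * Real.exp n)) := by
            apply mul_le_mul_of_nonneg_left _ (by positivity)
            exact mul_le_mul_of_nonneg_left ih (Real.exp_pos 1).le
      _ = ((n+1).factorial : ℝ) * Real.exp (((n+1:ℕ)):ℝ) := by
            rw [Nat.factorial_succ]
            push_cast
            rw [Real.exp_add]
            ring

private lemma exp_mul_pow_le_aux (n : ℕ) (hn : 1 ≤ n) :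
    Real.exp 1 * (n:ℝ)^(n+1) ≤ ((n:ℝ)+1)^(n+1) := by
  have hn0 : (0:ℝ) < n := by exact_mod_cast hn
  set E := Real.exp (1/((n:ℝ)+1)) with hE
  have hEpos : 0 < E := Real.exp_pos _
  have h1 : (n:ℝ) * E ≤ (n:ℝ) + 1 := by
    have h2 := Real.add_one_le_exp (-(1/((n:ℝ)+1)))
    have hprod : Real.exp (-(1/((n:ℝ)+1))) * E = 1 := by
      rw [hE, ← Real.exp_add]; simp
    have h3 : (1:ℝ) - 1/((n:ℝ)+1) = n/((n:ℝ)+1) := by field_simp; ring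
    have h4 : (n:ℝ)/((n:ℝ)+1) ≤ Real.exp (-(1/((n:ℝ)+1))) := by linarith
    have h5 : (n:ℝ)/((n:ℝ)+1) * E ≤ Real.exp (-(1/((n:ℝ)+1))) * E :=
      mul_le_mul_of_nonneg_right h4 hEpos.le
    rw [hprod] at h5
    have h6 : (n:ℝ) * E ≤ (n:ℝ) + 1 := by
      have h7 : (n:ℝ)/((n:ℝ)+1) * E * ((n:ℝ)+1) ≤ 1 * ((n:ℝ)+1) :=
        mul_le_mul_of_nonneg_right h5 (by positivity)
      have h8 : (n:ℝ)/((n:ℝ)+1) * E * ((n:ℝ)+1) = (n:ℝ) * E := by field_simp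
      linarith [h8 ▸ h7]
    exact h6
  calc Real.exp 1 * (n:ℝ)^(n+1) = ((n:ℝ) * E)^(n+1) := by
        rw [mul_pow, hE, ← Real.exp_nat_mul]
        have : ((n:ℕ)+1 : ℝ) ≠ 0 := by positivity
        rw [mul_comm]
        congr 2
        push_cast
        field_simp
  _ ≤ ((n:ℝ)+1)^(n+1) := pow_le_pow_left₀ (by positivity) h1 (n+1)

private lemma factorial_mul_le (n : ℕ) (hn : 1 ≤ n) :
    (n.factorial : ℝ) * Real.exp n ≤ Real.exp 1 * n * (n:ℝ)^n := by
  induction n with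
  | zero => omega
  | succ n ih =>
    rcases Nat.eq_zero_or_pos n with h0 | h1
    · subst h0
      simp [Nat.factorial]
    · have key := exp_mul_pow_le_aux n h1
      have ihn := ih h1
      calc ((n+1).factorial : ℝ) * Real.exp (((n+1:ℕ)):ℝ)
          = ((n:ℝ)+1) * Real.exp 1 * ((n.factorial:ℝ) * Real.exp n) := by
            rw [Nat.factorial_succ]
            push_cast
            rw [Real.exp_add]
            ring
      _ ≤ ((n:ℝ)+1) * Real.exp 1 * (Real.exp 1 * n * (n:ℝ)^n) := by
            apply mul_le_mul_of_nonneg_left ihn (by positivity)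
      _ = ((n:ℝ)+1) * (Real.exp 1 * (Real.exp 1 * (n:ℝ)^(n+1))) := by ring
      _ ≤ ((n:ℝ)+1) * (Real.exp 1 * ((n:ℝ)+1)^(n+1)) := by
            apply mul_le_mul_of_nonneg_left _ (by positivity)
            exact mul_le_mul_of_nonneg_left key (Real.exp_pos 1).le
      _ = Real.exp 1 * ((n:ℕ)+1 : ℝ) * ((n:ℝ)+1)^(n+1) := by push_cast; ring
      _ = Real.exp 1 * (((n+1):ℕ):ℝ) * ((((n+1)):ℕ):ℝ)^(n+1) := by push_cast; ring

private lemma log_factorial_ge (n : ℕ) :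
    (n:ℝ) * Real.log n - n ≤ Real.log (n.factorial) := by
  rcases Nat.eq_zero_or_pos n with h0 | h1
  · subst h0; simp
  · have hn0 : (0:ℝ) < n := by exact_mod_cast h1
    have h := pow_le_factorial_mul n
    have hpow : (0:ℝ) < (n:ℝ)^n := by positivity
    have hlog := Real.log_le_log hpow h
    rw [Real.log_pow, Real.log_mul (by positivity) (Real.exp_ne_zero _), Real.log_exp] at hlog
    push_cast at hlog ⊢
    linarith

private lemma log_factorial_le (n : ℕ) :
    Real.log (n.factorial) ≤ (n:ℝ) * Real.log n - n + 1 + Real.log n := by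
  rcases Nat.eq_zero_or_pos n with h0 | h1
  · subst h0; simp
  · have hn0 : (0:ℝ) < n := by exact_mod_cast h1
    have h := factorial_mul_le n h1
    have hfac : (0:ℝ) < (n.factorial : ℝ) * Real.exp n := by positivity
    have hlog := Real.log_le_log hfac h
    rw [Real.log_mul (by positivity) (Real.exp_ne_zero _), Real.log_exp,
      Real.log_mul (by positivity) (by positivity),
      Real.log_mul (Real.exp_ne_zero _) (by positivity), Real.log_exp, Real.log_pow] at hlog
    push_cast at hlog ⊢
    linarith


private lemma log_nat_mono {a b : ℕ} (hb : 1 ≤ b) (hab : a ≤ b) :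
    Real.log a ≤ Real.log b := by
  rcases Nat.eq_zero_or_pos a with h0 | h1
  · subst h0
    simpa using Real.log_nonneg (by exact_mod_cast hb)
  · exact Real.log_le_log (by exact_mod_cast h1) (by exact_mod_cast hab)

private lemma log_choose_sum {N k : ℕ} (hk : k ≤ N) :
    Real.log (N.choose k) =
      Real.log (N.factorial) - Real.log (k.factorial) - Real.log ((N-k).factorial) := by
  have h := Nat.choose_mul_factorial_mul_factorial hk
  have hcast : ((N.choose k : ℕ) : ℝ) * (k.factorial : ℝ) * ((N-k).factorial : ℝ)
      = (N.factorial : ℝ) := by exact_mod_cast congrArg (Nat.cast (R := ℝ)) h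
  have h1 : Real.log ((N.choose k : ℝ) * (k.factorial : ℝ) * ((N-k).factorial : ℝ))
      = Real.log (N.choose k) + Real.log (k.factorial) + Real.log ((N-k).factorial) := by
    have hc0 : ((N.choose k : ℕ) : ℝ) ≠ 0 := by exact_mod_cast (Nat.choose_pos hk).ne'
    have hf1 : ((k.factorial : ℕ) : ℝ) ≠ 0 := by exact_mod_cast (Nat.factorial_pos _).ne'
    have hf2 : (((N-k).factorial : ℕ) : ℝ) ≠ 0 := by exact_mod_cast (Nat.factorial_pos _).ne'
    rw [Real.log_mul (mul_ne_zero hc0 hf1) hf2, Real.log_mul hc0 hf1]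
  rw [hcast] at h1
  linarith

private lemma log_choose_le {N k : ℕ} (hN : 1 ≤ N) (hk : k ≤ N) :
    Real.log (N.choose k) ≤
      ((N:ℝ) * Real.log N - (k:ℝ) * Real.log k - ((N-k:ℕ):ℝ) * Real.log ((N-k:ℕ):ℝ))
        + (1 + Real.log N) := by
  have h1 := log_choose_sum hk
  have h2 := log_factorial_le N
  have h3 := log_factorial_ge k
  have h4 := log_factorial_ge (N-k)
  have hcast : ((N-k:ℕ):ℝ) = (N:ℝ) - k := by
    push_cast [Nat.cast_sub hk]; ring
  rw [h1]
  push_cast [hcast] at *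
  linarith

private lemma log_choose_ge {N k : ℕ} (hN : 1 ≤ N) (hk : k ≤ N) :
    ((N:ℝ) * Real.log N - (k:ℝ) * Real.log k - ((N-k:ℕ):ℝ) * Real.log ((N-k:ℕ):ℝ))
      - (2 + 2 * Real.log N) ≤ Real.log (N.choose k) := by
  have h1 := log_choose_sum hk
  have h2 := log_factorial_ge N
  have h3 := log_factorial_le k
  have h4 := log_factorial_le (N-k)
  have h5 : Real.log k ≤ Real.log N := log_nat_mono hN hk
  have h6 : Real.log (N-k : ℕ) ≤ Real.log N := log_nat_mono hN (Nat.sub_le _ _)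
  have hcast : ((N-k:ℕ):ℝ) = (N:ℝ) - k := by
    push_cast [Nat.cast_sub hk]; ring
  rw [h1]
  rw [hcast] at h4 h6 ⊢
  linarith

private lemma N_mul_gEntropy {N k : ℕ} (hN : 1 ≤ N) (hk : k ≤ N) :
    (N:ℝ) * gEntropy ((2*(k:ℝ) - N)/N) =
      (k:ℝ) * Real.log k + ((N-k:ℕ):ℝ) * Real.log ((N-k:ℕ):ℝ) - (N:ℝ) * Real.log N := by
  have hN0 : (N:ℝ) ≠ 0 := by positivity
  have hNpos : (0:ℝ) < N := by exact_mod_cast hN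
  have hcast : ((N-k:ℕ):ℝ) = (N:ℝ) - k := by
    push_cast [Nat.cast_sub hk]; ring
  have hlogdiv : ∀ a : ℕ, (a:ℝ) * Real.log ((a:ℝ)/N) = (a:ℝ) * Real.log a - (a:ℝ) * Real.log N := by
    intro a
    rcases Nat.eq_zero_or_pos a with h0 | h1
    · subst h0; simp
    · rw [Real.log_div (by exact_mod_cast h1.ne') hN0]; ring
  have e1 : (1 - (2*(k:ℝ) - N)/N)/2 = ((N:ℝ) - k)/N := by field_simp; ring
  have e2 : (1 + (2*(k:ℝ) - N)/N)/2 = (k:ℝ)/N := by field_simp; ring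
  unfold gEntropy
  rw [e1, e2]
  have e3 : (N:ℝ) * (((N:ℝ) - k)/N * Real.log (((N:ℝ) - k)/N) + (k:ℝ)/N * Real.log ((k:ℝ)/N))
      = ((N:ℝ) - k) * Real.log (((N:ℝ) - k)/N) + (k:ℝ) * Real.log ((k:ℝ)/N) := by
    field_simp
  rw [e3, ← hcast, hlogdiv k, hlogdiv (N-k)]
  linear_combination (-Real.log (N:ℝ)) * hcast


noncomputable def psiFC (U : ℝ → ℝ) (β h : ℝ) (N k : ℕ) : ℝ :=
  β * ((k:ℝ) * U ((1/(N:ℝ)) * (2*(k:ℝ) - N - 1)) -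
       ((N:ℝ) - k) * U ((1/(N:ℝ)) * (2*(k:ℝ) - N + 1)))
    + β * h * (2*(k:ℝ) - N)

private def boolEquiv (N : ℕ) : (Fin N → Bool) ≃ Finset (Fin N) where
  toFun σ := Finset.univ.filter fun i => σ i = true
  invFun s := fun i => decide (i ∈ s)
  left_inv σ := by funext i; simp
  right_inv s := by ext i; simp

private lemma ham_eq {N : ℕ} (U : ℝ → ℝ) (β h : ℝ) (σ : Fin N → Bool) :
    -β * hamFC U h σ =
      psiFC U β h N (#(Finset.univ.filter fun i => σ i = true)) := by
  set s : Finset (Fin N) := Finset.univ.filter fun i => σ i = true with hs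
  set k : ℕ := #s with hk
  have hcard : #(Finset.univ.filter fun i => ¬ (σ i = true)) = N - k := by
    rw [Finset.filter_not, Finset.card_sdiff_of_subset (Finset.filter_subset _ _)]
    simp [Finset.card_univ, hk, hs]
  have hkN : k ≤ N := by
    have := Finset.card_filter_le (Finset.univ : Finset (Fin N)) (fun i => σ i = true)
    simpa [Finset.card_univ] using this
  have hcardR : (#(Finset.univ.filter fun i => ¬ (σ i = true)) : ℝ) = (N:ℝ) - k := by
    rw [hcard]; push_cast [Nat.cast_sub hkN]; ring
  have hspin_t : ∀ i, σ i = true → spin (σ i) = 1 := by intro i hi; simp [spin, hi]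
  have hspin_f : ∀ i, ¬(σ i = true) → spin (σ i) = -1 := by
    intro i hi; simp [spin, Bool.not_eq_true] at *; simp [hi]
  have hS : (∑ i, spin (σ i)) = 2*(k:ℝ) - N := by
    rw [← Finset.sum_filter_add_sum_filter_not Finset.univ (fun i => σ i = true)]
    rw [Finset.sum_congr rfl (fun i hi => hspin_t i (Finset.mem_filter.1 hi).2),
        Finset.sum_congr rfl (fun i hi => hspin_f i (Finset.mem_filter.1 hi).2)]
    simp only [Finset.sum_const, nsmul_eq_mul, mul_one, mul_neg]
    rw [← hs, ← hk, hcardR]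
    ring
  have herase : ∀ i, (∑ j ∈ Finset.univ.erase i, spin (σ j))
      = (2*(k:ℝ) - N) - spin (σ i) := by
    intro i
    rw [← hS]
    exact Finset.sum_erase_eq_sub (Finset.mem_univ i)
  have hUsum : (∑ i, spin (σ i) * U ((1 / (N : ℝ)) * ∑ j ∈ Finset.univ.erase i, spin (σ j)))
      = (k:ℝ) * U ((1/(N:ℝ)) * (2*(k:ℝ) - N - 1)) -
        ((N:ℝ) - k) * U ((1/(N:ℝ)) * (2*(k:ℝ) - N + 1)) := by
    have hterm : ∀ i, spin (σ i) * U ((1 / (N : ℝ)) * ∑ j ∈ Finset.univ.erase i, spin (σ j))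
        = spin (σ i) * U ((1/(N:ℝ)) * ((2*(k:ℝ) - N) - spin (σ i))) := by
      intro i; rw [herase]
    rw [Finset.sum_congr rfl (fun i _ => hterm i)]
    rw [← Finset.sum_filter_add_sum_filter_not Finset.univ (fun i => σ i = true)]
    have e1 : ∀ i ∈ Finset.univ.filter (fun i => σ i = true),
        spin (σ i) * U ((1/(N:ℝ)) * ((2*(k:ℝ) - N) - spin (σ i)))
        = U ((1/(N:ℝ)) * (2*(k:ℝ) - N - 1)) := by
      intro i hi
      rw [hspin_t i (Finset.mem_filter.1 hi).2]
      ring_nf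
    have e2 : ∀ i ∈ Finset.univ.filter (fun i => ¬(σ i = true)),
        spin (σ i) * U ((1/(N:ℝ)) * ((2*(k:ℝ) - N) - spin (σ i)))
        = -U ((1/(N:ℝ)) * (2*(k:ℝ) - N + 1)) := by
      intro i hi
      rw [hspin_f i (Finset.mem_filter.1 hi).2]
      ring_nf
    rw [Finset.sum_congr rfl e1, Finset.sum_congr rfl e2]
    simp only [Finset.sum_const, nsmul_eq_mul]
    rw [← hs, ← hk, hcardR]
    ring
  unfold hamFC psiFC
  rw [hUsum, hS]
  ring

private lemma Z_eq {N : ℕ} (U : ℝ → ℝ) (β h : ℝ) :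
    (∑ σ : Fin N → Bool, Real.exp (-β * hamFC U h σ)) =
      ∑ k ∈ Finset.range (N+1), (N.choose k : ℝ) * Real.exp (psiFC U β h N k) := by
  have h1 : (∑ σ : Fin N → Bool, Real.exp (-β * hamFC U h σ))
      = ∑ s : Finset (Fin N), Real.exp (psiFC U β h N (#s)) := by
    rw [← Equiv.sum_comp (boolEquiv N) (fun s => Real.exp (psiFC U β h N (#s)))]
    exact Finset.sum_congr rfl fun σ _ => by rw [ham_eq U β h σ]; rfl
  rw [h1, ← Finset.powerset_univ, Finset.sum_powerset_apply_card (fun k => Real.exp (psiFC U β h N k)) (x := Finset.univ)]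
  simp only [Finset.card_univ, Fintype.card_fin, nsmul_eq_mul]

set_option maxHeartbeats 2000000 in
/-- Free energy density of the general fully connected model:
`(1/N) log ∑_σ exp(-β H_N(σ)) → max_{m ∈ [-1,1]} [ β m U(m) + βh m - g(m) ]`. -/
theorem general_fully_connected_free_energy
    (U : ℝ → ℝ) (hU : ContinuousOn U (Set.Icc (-1 : ℝ) 1))
    (β h : ℝ) (hβ : 0 < β) :
    Tendsto
      (fun N : ℕ => (1 / (N : ℝ)) * Real.log
        (∑ σ : Fin N → Bool, Real.exp (-β * hamFC U h σ)))
      atTop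
      (nhds (⨆ m : Set.Icc (-1 : ℝ) 1,
        (β * (m : ℝ) * U m + β * h * (m : ℝ) - gEntropy m))) := by
  classical
  -- continuity of the variational functional
  have hgcont : Continuous gEntropy := by
    have h1 : Continuous fun m : ℝ => (1 - m)/2 := by fun_prop
    have h2 : Continuous fun m : ℝ => (1 + m)/2 := by fun_prop
    exact (Real.continuous_mul_log.comp h1).add (Real.continuous_mul_log.comp h2)
  set F : ℝ → ℝ := fun m => β * m * U m + β * h * m - gEntropy m with hFdef
  have hFcont : ContinuousOn F (Set.Icc (-1:ℝ) 1) := by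
    apply ContinuousOn.sub
    · exact ((continuousOn_const.mul continuousOn_id).mul hU).add
        (continuousOn_const.mul continuousOn_id)
    · exact hgcont.continuousOn
  obtain ⟨mstar, hmstar, hmax⟩ :=
    isCompact_Icc.exists_isMaxOn (Set.nonempty_Icc.mpr (by norm_num)) hFcont
  haveI : Nonempty (Set.Icc (-1:ℝ) 1) := ⟨⟨0, by norm_num⟩⟩
  have hsup : (⨆ m : Set.Icc (-1:ℝ) 1,
      (β * (m:ℝ) * U m + β * h * (m:ℝ) - gEntropy m)) = F mstar := by
    apply le_antisymm
    · exact ciSup_le fun m => hmax m.2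
    · have hbdd : BddAbove (Set.range fun m : Set.Icc (-1:ℝ) 1 =>
          β * (m:ℝ) * U m + β * h * (m:ℝ) - gEntropy m) :=
        ⟨F mstar, by rintro x ⟨m, rfl⟩; exact hmax m.2⟩
      exact le_ciSup hbdd ⟨mstar, hmstar⟩
  clear_value F
  rw [hsup]
  have hfun : (fun N : ℕ => (1 / (N : ℝ)) * Real.log
        (∑ σ : Fin N → Bool, Real.exp (-β * hamFC U h σ)))
      = fun N : ℕ => (1 / (N : ℝ)) * Real.log
        (∑ k ∈ Finset.range (N+1), (N.choose k : ℝ) * Real.exp (psiFC U β h N k)) := by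
    funext N; rw [Z_eq]
  rw [hfun]
  -- error term tends to zero
  have hlogN : Tendsto (fun N : ℕ => Real.log N / N) atTop (nhds 0) := by
    have := Real.isLittleO_log_id_atTop.tendsto_div_nhds_zero.comp
      (tendsto_natCast_atTop_atTop (R := ℝ))
    simpa [Function.comp_def] using this
  have hlogN1 : Tendsto (fun N : ℕ => Real.log ((N:ℝ)+1) / N) atTop (nhds 0) := by
    apply squeeze_zero' (g := fun N : ℕ => Real.log 2 / N + Real.log N / N)
    · filter_upwards [eventually_ge_atTop 1] with N hN
      have hN1 : (1:ℝ) ≤ N := by exact_mod_cast hN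
      exact div_nonneg (Real.log_nonneg (by linarith)) (by linarith)
    · filter_upwards [eventually_ge_atTop 1] with N hN
      have hN1 : (1:ℝ) ≤ N := by exact_mod_cast hN
      have h2 : Real.log ((N:ℝ)+1) ≤ Real.log 2 + Real.log N := by
        rw [← Real.log_mul (by norm_num) (by linarith)]
        exact Real.log_le_log (by linarith) (by linarith)
      rw [← add_div]
      exact div_le_div_of_nonneg_right h2 (by linarith) |>.trans_eq rfl
    · have := (tendsto_const_div_atTop_nhds_zero_nat (Real.log 2)).add hlogN
      simpa using this
  have herr : Tendsto (fun N : ℕ => Real.log ((N:ℝ)+1)/N + 3/N + 3*(Real.log N/N))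
      atTop (nhds 0) := by
    have := (hlogN1.add (tendsto_const_div_atTop_nhds_zero_nat 3)).add (hlogN.const_mul 3)
    simpa using this
  rw [Metric.tendsto_atTop]
  intro ε hε
  have h8pos : (0:ℝ) < 8 * (β + 1) := by nlinarith
  obtain ⟨ε₁, hε₁pos, hβε₁⟩ : ∃ e : ℝ, 0 < e ∧ β * e ≤ ε/8 := by
    refine ⟨ε / (8 * (β + 1)), div_pos hε h8pos, ?_⟩
    rw [mul_div_assoc', div_le_div_iff₀ h8pos (by norm_num : (0:ℝ) < 8)]
    nlinarith
  obtain ⟨δ, hδpos, hδU⟩ := (Metric.uniformContinuousOn_iff).1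
    (isCompact_Icc.uniformContinuousOn_of_continuous hU) ε₁ hε₁pos
  obtain ⟨δ₂, hδ₂pos, hδ₂F⟩ := Metric.continuousWithinAt_iff.1
    (hFcont mstar hmstar) (ε/8) (by positivity)
  have hev : ∀ᶠ N : ℕ in atTop, ((1 ≤ N ∧ 1/(N:ℝ) < δ) ∧ 2/(N:ℝ) < δ₂) ∧
      (Real.log ((N:ℝ)+1)/N + 3/N + 3*(Real.log N/N)) < ε/8 := by
    have e1 : ∀ᶠ N : ℕ in atTop, 1 ≤ N := eventually_ge_atTop 1
    have e2 : ∀ᶠ N : ℕ in atTop, 1/(N:ℝ) < δ :=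
      tendsto_one_div_atTop_nhds_zero_nat.eventually_lt_const hδpos
    have e3 : ∀ᶠ N : ℕ in atTop, 2/(N:ℝ) < δ₂ :=
      (tendsto_const_div_atTop_nhds_zero_nat 2).eventually_lt_const hδ₂pos
    have e4 := herr.eventually_lt_const (by positivity : (0:ℝ) < ε/8)
    exact ((e1.and e2).and e3).and e4
  obtain ⟨N₀, hN₀⟩ := eventually_atTop.1 hev
  refine ⟨N₀, fun N hN => ?_⟩
  obtain ⟨⟨⟨hN1, hNδ⟩, hNδ₂⟩, hNerr⟩ := hN₀ N hN
  have hNpos : (0:ℝ) < N := by exact_mod_cast hN1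
  have hN0 : (N:ℝ) ≠ 0 := hNpos.ne'
  -- magnetization grid lies in [-1,1]
  have hmIcc : ∀ k, k ≤ N → (2*(k:ℝ) - N)/N ∈ Set.Icc (-1:ℝ) 1 := by
    intro k hk
    have hk' : (k:ℝ) ≤ N := by exact_mod_cast hk
    have hk0 : (0:ℝ) ≤ k := Nat.cast_nonneg k
    constructor
    · rw [le_div_iff₀ hNpos]; linarith
    · rw [div_le_one hNpos]; linarith
  -- key pointwise estimate
  have hkey : ∀ k, k ≤ N →
      |Real.log (N.choose k) + psiFC U β h N k - (N:ℝ) * F ((2*(k:ℝ) - N)/N)|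
        ≤ (3 + 3*Real.log N) + β * N * ε₁ := by
    intro k hk
    set m : ℝ := (2*(k:ℝ) - N)/N with hm
    have hk' : (k:ℝ) ≤ N := by exact_mod_cast hk
    have hk0 : (0:ℝ) ≤ k := Nat.cast_nonneg k
    have hmIcc' := hmIcc k hk
    have hlogNnn : 0 ≤ Real.log N := Real.log_nonneg (by exact_mod_cast hN1)
    have hgE := N_mul_gEntropy hN1 hk
    have hA : |Real.log (N.choose k) + (N:ℝ) * gEntropy m| ≤ 3 + 3*Real.log N := by
      have hcu := log_choose_le hN1 hk
      have hcl := log_choose_ge hN1 hk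
      rw [hm, hgE, abs_le]
      constructor <;> linarith
    have hNm : (N:ℝ) * m = 2*(k:ℝ) - N := by rw [hm]; field_simp
    have ha : (1/(N:ℝ)) * (2*(k:ℝ) - N - 1) = m - 1/N := by rw [hm]; field_simp
    have hb : (1/(N:ℝ)) * (2*(k:ℝ) - N + 1) = m + 1/N := by rw [hm]; field_simp
    have hUA : (k:ℝ) * |U (m - 1/N) - U m| ≤ (k:ℝ) * ε₁ := by
      rcases Nat.eq_zero_or_pos k with h0 | h1
      · subst h0; simp
      · apply mul_le_mul_of_nonneg_left _ hk0
        have hk1 : (1:ℝ) ≤ k := by exact_mod_cast h1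
        have haIcc : m - 1/N ∈ Set.Icc (-1:ℝ) 1 := by
          have hsub : m - 1/N = (2*(k:ℝ) - N - 1)/N := by rw [hm]; field_simp
          rw [hsub]
          constructor
          · rw [le_div_iff₀ hNpos]; linarith
          · rw [div_le_one hNpos]; linarith
        have hd : dist (m - 1/N) m < δ := by
          rw [Real.dist_eq]
          have he : m - 1/N - m = -(1/N) := by ring
          rw [he, abs_neg, abs_of_pos (by positivity)]
          exact hNδ
        have := hδU _ haIcc _ hmIcc' hd
        rw [Real.dist_eq] at this
        exact this.le
    have hUB : ((N:ℝ) - k) * |U (m + 1/N) - U m| ≤ ((N:ℝ) - k) * ε₁ := by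
      rcases eq_or_lt_of_le hk with rfl | hkN
      · simp
      · apply mul_le_mul_of_nonneg_left _ (by linarith)
        have hk1 : (k:ℝ) + 1 ≤ N := by exact_mod_cast hkN
        have hbIcc : m + 1/N ∈ Set.Icc (-1:ℝ) 1 := by
          have hsub : m + 1/N = (2*(k:ℝ) - N + 1)/N := by rw [hm]; field_simp
          rw [hsub]
          constructor
          · rw [le_div_iff₀ hNpos]; linarith
          · rw [div_le_one hNpos]; linarith
        have hd : dist (m + 1/N) m < δ := by
          rw [Real.dist_eq]
          have he : m + 1/N - m = 1/N := by ring
          rw [he, abs_of_pos (by positivity)]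
          exact hNδ
        have := hδU _ hbIcc _ hmIcc' hd
        rw [Real.dist_eq] at this
        exact this.le
    have hB : |psiFC U β h N k - (N:ℝ) * (β*m*U m + β*h*m)| ≤ β * N * ε₁ := by
      have hid : psiFC U β h N k - (N:ℝ)*(β*m*U m + β*h*m)
          = β*((k:ℝ)*(U (m-1/N) - U m) - ((N:ℝ)-(k:ℝ))*(U (m+1/N) - U m)) := by
        unfold psiFC
        rw [ha, hb]
        linear_combination (-(β*h + β*U m)) * hNm
      rw [hid, abs_mul, abs_of_pos hβ]
      have htri : |(k:ℝ)*(U (m-1/N) - U m) - ((N:ℝ)-(k:ℝ))*(U (m+1/N) - U m)|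
          ≤ (k:ℝ)*|U (m-1/N) - U m| + ((N:ℝ)-(k:ℝ))*|U (m+1/N) - U m| := by
        refine (abs_sub _ _).trans ?_
        rw [abs_mul, abs_mul, abs_of_nonneg hk0, abs_of_nonneg (by linarith : (0:ℝ) ≤ (N:ℝ)-k)]
      have h2 : (k:ℝ)*|U (m-1/N) - U m| + ((N:ℝ)-(k:ℝ))*|U (m+1/N) - U m|
          ≤ (k:ℝ)*ε₁ + ((N:ℝ)-(k:ℝ))*ε₁ := add_le_add hUA hUB
      calc β * |(k:ℝ)*(U (m-1/N) - U m) - ((N:ℝ)-(k:ℝ))*(U (m+1/N) - U m)|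
          ≤ β * ((k:ℝ)*ε₁ + ((N:ℝ)-(k:ℝ))*ε₁) := by
            apply mul_le_mul_of_nonneg_left (htri.trans h2) hβ.le
      _ = β * N * ε₁ := by ring
    have hsplit : Real.log (N.choose k) + psiFC U β h N k - (N:ℝ) * F m
        = (Real.log (N.choose k) + (N:ℝ)*gEntropy m)
          + (psiFC U β h N k - (N:ℝ)*(β*m*U m + β*h*m)) := by
      simp only [hFdef]
      ring
    rw [hsplit]
    exact (abs_add_le _ _).trans (add_le_add hA hB)
  -- positivity of the partition function
  set Z : ℝ := ∑ k ∈ Finset.range (N+1), (N.choose k : ℝ) * Real.exp (psiFC U β h N k)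
    with hZdef
  clear_value Z
  have hchoosepos : ∀ k ∈ Finset.range (N+1), (0:ℝ) < (N.choose k : ℝ) := by
    intro k hk
    exact_mod_cast Nat.choose_pos (Nat.lt_succ_iff.1 (Finset.mem_range.1 hk))
  have hZpos : 0 < Z := by
    rw [hZdef]
    exact Finset.sum_pos (fun k hk => mul_pos (hchoosepos k hk) (Real.exp_pos _))
      ⟨0, Finset.mem_range.2 (Nat.succ_pos N)⟩
  have hterm_eq : ∀ k ∈ Finset.range (N+1),
      (N.choose k:ℝ) * Real.exp (psiFC U β h N k)
        = Real.exp (Real.log (N.choose k) + psiFC U β h N k) := by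
    intro k hk
    rw [Real.exp_add, Real.exp_log (hchoosepos k hk)]
  -- upper bound
  have hup : ∀ k ∈ Finset.range (N+1), (N.choose k:ℝ) * Real.exp (psiFC U β h N k)
      ≤ Real.exp ((N:ℝ)*F mstar + ((3 + 3*Real.log N) + β * N * ε₁)) := by
    intro k hk
    have hkN := Nat.lt_succ_iff.1 (Finset.mem_range.1 hk)
    rw [hterm_eq k hk]
    apply Real.exp_le_exp.2
    have h1 := (abs_le.1 (hkey k hkN)).2
    have h2 : F ((2*(k:ℝ)-N)/N) ≤ F mstar := hmax (hmIcc k hkN)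
    have h3 : (N:ℝ) * F ((2*(k:ℝ)-N)/N) ≤ (N:ℝ) * F mstar :=
      mul_le_mul_of_nonneg_left h2 hNpos.le
    linarith
  have hZle : Z ≤ ((N:ℝ)+1) * Real.exp ((N:ℝ)*F mstar + ((3 + 3*Real.log N) + β * N * ε₁)) := by
    have := Finset.sum_le_card_nsmul _ _ _ hup
    rw [Finset.card_range] at this
    rw [hZdef]
    calc (∑ k ∈ Finset.range (N+1), (N.choose k : ℝ) * Real.exp (psiFC U β h N k))
        ≤ (N+1) • Real.exp ((N:ℝ)*F mstar + ((3 + 3*Real.log N) + β * N * ε₁)) := this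
    _ = ((N:ℝ)+1) * Real.exp ((N:ℝ)*F mstar + ((3 + 3*Real.log N) + β * N * ε₁)) := by
        rw [nsmul_eq_mul]; push_cast; ring
  have hlogup : Real.log Z ≤ Real.log ((N:ℝ)+1) + ((N:ℝ)*F mstar + ((3 + 3*Real.log N) + β * N * ε₁)) := by
    have := Real.log_le_log hZpos hZle
    rwa [Real.log_mul (by positivity) (Real.exp_ne_zero _), Real.log_exp] at this
  have hup2 : (1/(N:ℝ)) * Real.log Z
      ≤ F mstar + (Real.log ((N:ℝ)+1)/N + 3/N + 3*(Real.log N/N)) + β*ε₁ := by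
    have h1 : (1/(N:ℝ)) * Real.log Z
        ≤ (1/(N:ℝ)) * (Real.log ((N:ℝ)+1) + ((N:ℝ)*F mstar + ((3 + 3*Real.log N) + β * N * ε₁))) :=
      mul_le_mul_of_nonneg_left hlogup (by positivity)
    have h2 : (1/(N:ℝ)) * (Real.log ((N:ℝ)+1) + ((N:ℝ)*F mstar + ((3 + 3*Real.log N) + β * N * ε₁)))
        = F mstar + (Real.log ((N:ℝ)+1)/N + 3/N + 3*(Real.log N/N)) + β*ε₁ := by
      field_simp; ring
    linarith
  -- lower bound
  have hp0 : 0 ≤ (1 + mstar)/2 := by have := hmstar.1; linarith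
  have hp1 : (1 + mstar)/2 ≤ 1 := by have := hmstar.2; linarith
  set kst : ℕ := ⌊(N:ℝ) * ((1 + mstar)/2)⌋₊ with hkstdef
  have hfl1 : (kst:ℝ) ≤ (N:ℝ)*((1 + mstar)/2) := Nat.floor_le (by positivity)
  have hfl2 : (N:ℝ)*((1 + mstar)/2) < kst + 1 := Nat.lt_floor_add_one _
  clear_value kst
  have hkstN : kst ≤ N := by
    have h1 : (kst:ℝ) ≤ N := hfl1.trans (by nlinarith)
    exact_mod_cast h1
  have hmkIcc := hmIcc kst hkstN
  have hdist : dist ((2*(kst:ℝ) - N)/N) mstar < δ₂ := by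
    rw [Real.dist_eq]
    have h1 : (2*(kst:ℝ) - N)/N - mstar = 2*((kst:ℝ) - (N:ℝ)*((1 + mstar)/2))/N := by
      field_simp; ring
    have h2 : |(kst:ℝ) - (N:ℝ)*((1 + mstar)/2)| ≤ 1 := abs_le.2 ⟨by linarith, by linarith⟩
    rw [h1, abs_div, abs_of_pos hNpos, abs_mul, abs_two]
    calc 2 * |(kst:ℝ) - (N:ℝ)*((1 + mstar)/2)| / N ≤ 2 * 1 / N := by gcongr
    _ = 2 / N := by ring
    _ < δ₂ := hNδ₂
  have hFmk' : F mstar - ε/8 ≤ F ((2*(kst:ℝ) - N)/N) := by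
    have := hδ₂F hmkIcc hdist
    rw [Real.dist_eq] at this
    have := (abs_lt.1 this).1
    linarith
  have hlow1 : Real.exp ((N:ℝ)*F ((2*(kst:ℝ) - N)/N) - ((3 + 3*Real.log N) + β * N * ε₁)) ≤ Z := by
    have hmem : kst ∈ Finset.range (N+1) := Finset.mem_range.2 (Nat.lt_succ_of_le hkstN)
    have h1 : Real.exp ((N:ℝ)*F ((2*(kst:ℝ) - N)/N) - ((3 + 3*Real.log N) + β * N * ε₁))
        ≤ (N.choose kst:ℝ) * Real.exp (psiFC U β h N kst) := by
      rw [hterm_eq kst hmem]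
      apply Real.exp_le_exp.2
      have := (abs_le.1 (hkey kst hkstN)).1
      linarith
    refine h1.trans ?_
    rw [hZdef]
    exact Finset.single_le_sum
      (fun k hk => (mul_pos (hchoosepos k hk) (Real.exp_pos _)).le) hmem
  have hlog_lower : (N:ℝ)*F ((2*(kst:ℝ) - N)/N) - ((3 + 3*Real.log N) + β * N * ε₁) ≤ Real.log Z := by
    have := Real.log_le_log (Real.exp_pos _) hlow1
    rwa [Real.log_exp] at this
  have hlow2 : F mstar - ε/8 - (3/N + 3*(Real.log N/N)) - β*ε₁ ≤ (1/(N:ℝ)) * Real.log Z := by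
    have h1 : (1/(N:ℝ)) * ((N:ℝ)*F ((2*(kst:ℝ) - N)/N) - ((3 + 3*Real.log N) + β * N * ε₁))
        ≤ (1/(N:ℝ)) * Real.log Z :=
      mul_le_mul_of_nonneg_left hlog_lower (by positivity)
    have h2 : (1/(N:ℝ)) * ((N:ℝ)*F ((2*(kst:ℝ) - N)/N) - ((3 + 3*Real.log N) + β * N * ε₁))
        = F ((2*(kst:ℝ) - N)/N) - (3/N + 3*(Real.log N/N)) - β*ε₁ := by
      field_simp; ring
    rw [h2] at h1
    linarith
  -- conclusion
  have hlogN1nn : 0 ≤ Real.log ((N:ℝ)+1)/N := by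
    apply div_nonneg _ hNpos.le
    apply Real.log_nonneg
    have : (1:ℝ) ≤ N := by exact_mod_cast hN1
    linarith
  rw [Real.dist_eq, abs_lt]
  constructor
  · have : 0 ≤ 3/(N:ℝ) + 3*(Real.log N/N) := by
      have hlogNnn : 0 ≤ Real.log N := Real.log_nonneg (by exact_mod_cast hN1)
      positivity
    linarith
  · linarith
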